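/- arXiv:2011.00371 — 3 statements merged into one kernel-verified Lean document; each statement's English description precedes it below -/
import Mathlib

section
/- Let I be a finite set and B, C two C*-algebras. If E_B : I × I → B* is an (I,B)-Schur kernel and E_C : I × I → C* is an (I,C)-Schur kernel, then the pointwise tensor product kernel (j,i) ↦ E_{B;j,i} ⊗ E_{C;j,i}, viewed as a map into (B ⊗ C)*, is an (I, B ⊗ C)-Schur kernel. -/
open scoped ComplexOrder TensorProduct
open Finset

/-- Schur kernel property for a family of continuous linear functionals. -/
def IsSchurKernel {I B : Type*} [Fintype I] [NormedRing B] [StarRing B]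
    [NormedAlgebra ℂ B] (E : I → I → (B →L[ℂ] ℂ)) : Prop :=
  ∀ (n : ℕ) (b : Fin n → B) (z : I × Fin n → ℂ),
    0 ≤ ∑ p : I × Fin n, ∑ q : I × Fin n,
      (starRingEnd ℂ) (z p) * E p.1 q.1 (star (b p.2) * b q.2) * z q

/-- The tensor product functional `φ ⊗ ψ` on `B ⊗[ℂ] C`, determined by
`(φ ⊗ ψ)(b ⊗ c) = φ(b) ψ(c)`. -/
noncomputable def tensorFunctional {B C : Type*} [NormedRing B] [NormedAlgebra ℂ B]
    [NormedRing C] [NormedAlgebra ℂ C] (φ : B →L[ℂ] ℂ) (ψ : C →L[ℂ] ℂ) :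
    B ⊗[ℂ] C →ₗ[ℂ] ℂ :=
  (TensorProduct.lid ℂ ℂ).toLinearMap ∘ₗ
    TensorProduct.map (φ : B →ₗ[ℂ] ℂ) (ψ : C →ₗ[ℂ] ℂ)

/-! ### Auxiliary material: Schur (Hadamard) product positivity for complex kernels -/

/-- Quadratic form of a complex kernel. -/
noncomputable def qf {J : Type*} [Fintype J] (A : J → J → ℂ) (x : J → ℂ) : ℂ :=
  ∑ s : J, ∑ t : J, (starRingEnd ℂ) (x s) * A s t * x t

lemma sum_two_aux {J : Type*} [Fintype J] [DecidableEq J] {s t : J} (hst : s ≠ t)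
    (f g : J → ℂ) :
    ∑ u : J, (if u = s then f u else if u = t then g u else 0) = f s + g t := by
  have h : ∀ u : J, (if u = s then f u else if u = t then g u else 0) =
      (if u = s then f u else 0) + (if u = t then g u else 0) := by
    intro u
    by_cases h1 : u = s <;> by_cases h2 : u = t <;> simp_all
  rw [Finset.sum_congr rfl fun u _ => h u, Finset.sum_add_distrib]
  simp

lemma qf_one {J : Type*} [Fintype J] [DecidableEq J] (A : J → J → ℂ) (s : J) :
    qf A (fun u => if u = s then 1 else 0) = A s s := by
  unfold qf
  simp [apply_ite, ite_mul, mul_ite, Finset.sum_ite_eq']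

lemma qf_two {J : Type*} [Fintype J] [DecidableEq J] (A : J → J → ℂ) {s t : J}
    (hst : s ≠ t) (a b : ℂ) :
    qf A (fun u => if u = s then a else if u = t then b else 0) =
      (starRingEnd ℂ) a * A s s * a + (starRingEnd ℂ) a * A s t * b +
      (starRingEnd ℂ) b * A t s * a + (starRingEnd ℂ) b * A t t * b := by
  unfold qf
  have inner : ∀ (c : ℂ) (s' : J),
      ∑ t' : J, c * A s' t' * (if t' = s then a else if t' = t then b else 0) =
        c * A s' s * a + c * A s' t * b := by
    intro c s'
    rw [← sum_two_aux hst (fun t' => c * A s' t' * a) (fun t' => c * A s' t' * b)]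
    refine Finset.sum_congr rfl fun u _ => ?_
    by_cases h1 : u = s <;> by_cases h2 : u = t <;> simp_all
  calc ∑ s' : J, ∑ t' : J,
        (starRingEnd ℂ) ((fun u => if u = s then a else if u = t then b else 0) s') *
          A s' t' * ((fun u => if u = s then a else if u = t then b else 0) t')
      = ∑ s' : J, if s' = s then
            ((starRingEnd ℂ) a * A s' s * a + (starRingEnd ℂ) a * A s' t * b)
          else if s' = t then
            ((starRingEnd ℂ) b * A s' s * a + (starRingEnd ℂ) b * A s' t * b)
          else 0 := by
        refine Finset.sum_congr rfl fun s' _ => ?_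
        by_cases h1 : s' = s <;> by_cases h2 : s' = t <;>
          simp_all [inner]
    _ = _ := by rw [sum_two_aux hst]; ring

lemma herm_of_qf_nonneg {J : Type*} [Fintype J] [DecidableEq J] (A : J → J → ℂ)
    (h : ∀ x : J → ℂ, 0 ≤ qf A x) (s t : J) : A t s = (starRingEnd ℂ) (A s t) := by
  have diag : ∀ u : J, (A u u).im = 0 := by
    intro u
    have := h (fun v => if v = u then 1 else 0)
    rw [qf_one] at this
    exact (Complex.le_def.mp this).2.symm
  by_cases hst : s = t
  · subst hst
    apply Complex.ext <;> simp [diag s]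
  · have h1 := h (fun u => if u = s then 1 else if u = t then 1 else 0)
    rw [qf_two A hst 1 1] at h1
    have h2 := h (fun u => if u = s then 1 else if u = t then Complex.I else 0)
    rw [qf_two A hst 1 Complex.I] at h2
    have e1 := (Complex.le_def.mp h1).2
    have e2 := (Complex.le_def.mp h2).2
    simp [Complex.add_im, Complex.mul_im, Complex.conj_im, Complex.conj_re,
      Complex.I_re, Complex.I_im, diag s, diag t] at e1 e2
    apply Complex.ext <;> simp [Complex.conj_re, Complex.conj_im] <;> linarith

/-- Schur product theorem, kernel form. -/
lemma schur_qf {J : Type*} [Fintype J] [DecidableEq J] (A B : J → J → ℂ)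
    (hA : ∀ x : J → ℂ, 0 ≤ qf A x) (hB : ∀ x : J → ℂ, 0 ≤ qf B x) (x : J → ℂ) :
    0 ≤ qf (fun s t => A s t * B s t) x := by
  have hpsd : (Matrix.of A).PosSemidef := by
    constructor
    · ext i j
      simpa [Matrix.conjTranspose_apply] using (herm_of_qf_nonneg A hA j i).symm
    · intro y
      have := hA y
      unfold qf at this
      simpa [dotProduct, Matrix.mulVec, Finset.mul_sum, mul_assoc, Finsupp.sum_fintype] using this
  obtain ⟨C, hC⟩ : ∃ C : Matrix J J ℂ, Matrix.of A = C.conjTranspose * C := by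
    open scoped MatrixOrder in
    exact CStarAlgebra.nonneg_iff_eq_star_mul_self.mp hpsd.nonneg
  have hAst : ∀ s t : J, A s t = ∑ r : J, (starRingEnd ℂ) (C r s) * C r t := by
    intro s t
    have := congrFun (congrFun hC s) t
    simpa [Matrix.mul_apply, Matrix.conjTranspose_apply] using this
  have key : ∀ s t : J, (starRingEnd ℂ) (x s) * (A s t * B s t) * x t
      = ∑ r : J, (starRingEnd ℂ) (C r s * x s) * B s t * (C r t * x t) := by
    intro s t
    rw [hAst, Finset.sum_mul, Finset.mul_sum, Finset.sum_mul]
    refine Finset.sum_congr rfl fun r _ => ?_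
    simp only [map_mul]
    ring
  have heq : qf (fun s t => A s t * B s t) x = ∑ r : J, qf B (fun u => C r u * x u) := by
    unfold qf
    simp_rw [key]
    rw [show (∑ s : J, ∑ t : J, ∑ r : J, (starRingEnd ℂ) (C r s * x s) * B s t * (C r t * x t))
        = ∑ s : J, ∑ r : J, ∑ t : J, (starRingEnd ℂ) (C r s * x s) * B s t * (C r t * x t)
      from Finset.sum_congr rfl fun s _ => Finset.sum_comm, Finset.sum_comm]
  rw [heq]
  exact Finset.sum_nonneg fun r _ => hB _

lemma tensorFunctional_tmul {B C : Type*} [NormedRing B] [NormedAlgebra ℂ B]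
    [NormedRing C] [NormedAlgebra ℂ C] (φ : B →L[ℂ] ℂ) (ψ : C →L[ℂ] ℂ) (b : B) (c : C) :
    tensorFunctional φ ψ (b ⊗ₜ[ℂ] c) = φ b * ψ c := by
  simp [tensorFunctional, smul_eq_mul]

/-- the pointwise tensor product of an `(I,B)`-Schur kernel and an
`(I,C)`-Schur kernel is an `(I, B ⊗ C)`-Schur kernel.  The elements
`X_h = Σ_m b_{h,m} ⊗ c_{h,m}` of `B ⊗ C` are given via their elementary-tensor
decompositions, and `X_h* X_k = Σ_{m',m} (b_{h,m'}* b_{k,m}) ⊗ (c_{h,m'}* c_{k,m})`. -/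
theorem tensorProduct_isSchurKernel {I B C : Type*} [Fintype I]
    [NormedRing B] [StarRing B] [CStarRing B] [NormedAlgebra ℂ B] [StarModule ℂ B]
    [NormedRing C] [StarRing C] [CStarRing C] [NormedAlgebra ℂ C] [StarModule ℂ C]
    (EB : I → I → (B →L[ℂ] ℂ)) (EC : I → I → (C →L[ℂ] ℂ))
    (hEB : IsSchurKernel EB) (hEC : IsSchurKernel EC) :
    ∀ (n N : ℕ) (bb : Fin n → Fin N → B) (cc : Fin n → Fin N → C)
      (z : I × Fin n → ℂ),
      0 ≤ ∑ p : I × Fin n, ∑ q : I × Fin n,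
        (starRingEnd ℂ) (z p) *
          tensorFunctional (EB p.1 q.1) (EC p.1 q.1)
            (∑ m' : Fin N, ∑ m : Fin N,
              (star (bb p.2 m') * bb q.2 m) ⊗ₜ[ℂ] (star (cc p.2 m') * cc q.2 m)) *
          z q := by
  classical
  intro n N bb cc z
  set ψ : I × Fin (n * N) ≃ (I × Fin n) × Fin N :=
    (Equiv.prodCongr (Equiv.refl I) finProdFinEquiv.symm).trans
      (Equiv.prodAssoc I (Fin n) (Fin N)).symm with hψ
  set A : ((I × Fin n) × Fin N) → ((I × Fin n) × Fin N) → ℂ :=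
    fun s t => EB s.1.1 t.1.1 (star (bb s.1.2 s.2) * bb t.1.2 t.2) with hA'
  set Bm : ((I × Fin n) × Fin N) → ((I × Fin n) × Fin N) → ℂ :=
    fun s t => EC s.1.1 t.1.1 (star (cc s.1.2 s.2) * cc t.1.2 t.2) with hBm'
  have hA : ∀ x : ((I × Fin n) × Fin N) → ℂ, 0 ≤ qf A x := by
    intro x
    have h := hEB (n * N)
      (fun r => bb (finProdFinEquiv.symm r).1 (finProdFinEquiv.symm r).2)
      (fun p => x (ψ p))
    refine le_of_le_of_eq h ?_
    unfold qf
    refine Fintype.sum_equiv ψ _ _ fun p => ?_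
    refine Fintype.sum_equiv ψ _ _ fun q => ?_
    rfl
  have hB : ∀ x : ((I × Fin n) × Fin N) → ℂ, 0 ≤ qf Bm x := by
    intro x
    have h := hEC (n * N)
      (fun r => cc (finProdFinEquiv.symm r).1 (finProdFinEquiv.symm r).2)
      (fun p => x (ψ p))
    refine le_of_le_of_eq h ?_
    unfold qf
    refine Fintype.sum_equiv ψ _ _ fun p => ?_
    refine Fintype.sum_equiv ψ _ _ fun q => ?_
    rfl
  have key := schur_qf A Bm hA hB (fun s => z s.1)
  unfold qf at key
  simp_rw [Fintype.sum_prod_type] at key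
  refine le_of_le_of_eq key ?_
  simp_rw [Fintype.sum_prod_type]
  refine Finset.sum_congr rfl fun i _ => ?_
  refine Finset.sum_congr rfl fun h _ => ?_
  rw [Finset.sum_comm]
  refine Finset.sum_congr rfl fun j _ => ?_
  rw [Finset.sum_comm]
  refine Finset.sum_congr rfl fun k _ => ?_
  simp only [map_sum, tensorFunctional_tmul, Finset.mul_sum, Finset.sum_mul, hA', hBm']
end

section
/- Let H be a Hilbert space, p ≥ 2, c ∈ ℝ, and (e_j)_{1≤j≤p} an orthonormal family in H. Define real numbers α_1 := c and α_j := c − (α_1² + ⋯ + α_{j−1}²) for 2 ≤ j ≤ p−1, and set h_1 := e_1 and h_j := α_1 e_1 + ⋯ + α_{j−1} e_{j−1} + e_j for 2 ≤ j ≤ p. Then ⟨h_i, h_j⟩ = c for all i ≠ j, and the family (h_j)_{1≤j≤p} is linearly independent. -/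
open Finset
open scoped InnerProductSpace

/-- with `α₁ = c`, `α_j = c − (α₁² + ⋯ + α_{j−1}²)` for `2 ≤ j ≤ p−1`, and
`h_j := α₁ e₁ + ⋯ + α_{j−1} e_{j−1} + e_j` built from an orthonormal family
`(e_j)_{1 ≤ j ≤ p}`, one has `⟨h_i, h_j⟩ = c` for `i ≠ j`, and `(h_j)_{1 ≤ j ≤ p}` is
linearly independent. -/
theorem offdiagonal_constant_construction {H : Type*} [NormedAddCommGroup H]
    [InnerProductSpace ℂ H] (p : ℕ) (hp : 2 ≤ p) (c : ℝ) (e : ℕ → H)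
    (he : ∀ i ∈ Finset.Icc 1 p, ∀ j ∈ Finset.Icc 1 p,
      ⟪e i, e j⟫_ℂ = if i = j then 1 else 0)
    (α : ℕ → ℝ) (hα1 : α 1 = c)
    (hαj : ∀ j, 2 ≤ j → j ≤ p - 1 → α j = c - ∑ k ∈ Finset.Ico 1 j, (α k) ^ 2)
    (h : ℕ → H)
    (hh : ∀ j ∈ Finset.Icc 1 p,
      h j = (∑ k ∈ Finset.Ico 1 j, (α k : ℂ) • e k) + e j) :
    (∀ i ∈ Finset.Icc 1 p, ∀ j ∈ Finset.Icc 1 p, i ≠ j → ⟪h i, h j⟫_ℂ = (c : ℂ)) ∧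
    LinearIndependent ℂ (fun j : Fin p => h (j.val + 1)) := by
  -- key: inner products of basis with h
  have key : ∀ j ∈ Finset.Icc 1 p, ∀ i ∈ Finset.Icc 1 p,
      ⟪e j, h i⟫_ℂ = if j < i then (α j : ℂ) else if j = i then 1 else 0 := by
    intro j hj i hi
    simp only [mem_Icc] at hj hi
    rw [hh i (by simp [mem_Icc, hi.1, hi.2]), inner_add_right, inner_sum]
    simp only [inner_smul_right]
    have : ∀ k ∈ Finset.Ico 1 i, (α k : ℂ) * ⟪e j, e k⟫_ℂ
        = if j = k then (α k : ℂ) else 0 := by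
      intro k hk
      simp only [mem_Ico] at hk
      rw [he j (by simp [mem_Icc, hj.1, hj.2]) k (by simp [mem_Icc, hk.1]; omega)]
      split <;> simp
    rw [Finset.sum_congr rfl this, Finset.sum_ite_eq (Finset.Ico 1 i) j (fun k => (α k : ℂ)),
      he j (by simp [mem_Icc, hj.1, hj.2]) i (by simp [mem_Icc, hi.1, hi.2])]
    simp only [mem_Ico]
    have hj1 := hj.1
    split_ifs <;> simp_all
  -- inner product ⟪h i, h j⟫ for i < j
  have main : ∀ i j, 1 ≤ i → i < j → j ≤ p → ⟪h i, h j⟫_ℂ = (c : ℂ) := by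
    intro i j hi1 hij hjp
    have hip : i ≤ p := le_of_lt (lt_of_lt_of_le hij hjp)
    have hiI : i ∈ Finset.Icc 1 p := by simp [mem_Icc, hi1, hip]
    have hjI : j ∈ Finset.Icc 1 p := by simp [mem_Icc, hjp]; omega
    rw [hh i hiI, inner_add_left, sum_inner]
    simp only [inner_smul_left]
    have h2 : ∀ k ∈ Finset.Ico 1 i, (starRingEnd ℂ) (α k : ℂ) * ⟪e k, h j⟫_ℂ
        = (α k : ℂ) ^ 2 := by
      intro k hk
      simp only [mem_Ico] at hk
      rw [key k (by simp [mem_Icc, hk.1]; omega) j hjI, if_pos (by omega), Complex.conj_ofReal]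
      ring
    rw [Finset.sum_congr rfl h2, key i hiI j hjI, if_pos hij]
    rcases eq_or_lt_of_le hi1 with h1 | h1
    · simp [← h1, hα1]
    · rw [hαj i h1 (by omega)]
      push_cast
      ring
  constructor
  · intro i hi j hj hne
    simp only [mem_Icc] at hi hj
    rcases lt_or_gt_of_ne hne with hlt | hgt
    · exact main i j hi.1 hlt hj.2
    · rw [← inner_conj_symm, main j i hj.1 hgt hi.2, Complex.conj_ofReal]
  · set M : Matrix (Fin p) (Fin p) ℂ := fun i j => ⟪e (j.val + 1), h (i.val + 1)⟫_ℂ with hM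
    have hmem : ∀ i : Fin p, i.val + 1 ∈ Finset.Icc 1 p := by
      intro i; simp [mem_Icc]
    have hMval : ∀ i j : Fin p, M i j
        = if (j:ℕ) < (i:ℕ) then ((α (j.val+1) : ℂ)) else if j = i then 1 else 0 := by
      intro i j
      rw [hM]
      simp only
      rw [key _ (hmem j) _ (hmem i)]
      rcases lt_trichotomy (j:ℕ) (i:ℕ) with h1 | h1 | h1
      · rw [if_pos (by omega), if_pos h1]
      · simp [Fin.ext_iff, h1]
      · rw [if_neg (by omega), if_neg (by omega), if_neg (by omega),
          if_neg (by simp [Fin.ext_iff]; omega)]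
    have htri : M.BlockTriangular OrderDual.toDual := by
      intro i j hij
      rw [hMval]
      have : (i:ℕ) < (j:ℕ) := hij
      rw [if_neg (by omega), if_neg (by simp [Fin.ext_iff]; omega)]
    have hdet : M.det = 1 := by
      rw [Matrix.det_of_lowerTriangular M htri]
      have : ∀ i : Fin p, M i i = 1 := by
        intro i; rw [hMval]; simp
      simp [this]
    have hrows : LinearIndependent ℂ (fun i : Fin p => M i) :=
      Matrix.linearIndependent_rows_iff_isUnit.2
        ((Matrix.isUnit_iff_isUnit_det M).2 (by simp [hdet]))
    let T : H →ₗ[ℂ] (Fin p → ℂ) :=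
      LinearMap.pi (fun j : Fin p => ((innerSL ℂ (e (j.val + 1))).toLinearMap))
    have hcomp : (fun i : Fin p => M i) = T ∘ (fun j : Fin p => h (j.val + 1)) := by
      funext i
      rfl
    rw [hcomp] at hrows
    exact LinearIndependent.of_comp T hrows
end

section
/- Let I be a finite set and for every finite Λ ⊆ V let β_{Λᶜ} = (β_{Λᶜ;i,j})_{i,j∈I} be a positive semidefinite matrix such that β_{Λᶜ;i,j} · Π_{x∈Λ∖Λ₀} Tr(h_{x,i}h_{x,j}*) = β_{Λ₀ᶜ;i,j} whenever Λ₀ ⊆ Λ. Then the linear functionals ψ̂_Λ(⊗_{x∈Λ} b_x) := Σ_{i,j∈I} Π_{x∈Λ} Tr(h_{x,i}h_{x,j}* b_x) · β_{Λᶜ;i,j} are positive on B(⊗_{x∈Λ}H_x) and form a projective family: ψ̂_Λ(b_{Λ₀} ⊗ 1_{Λ∖Λ₀}) = ψ̂_{Λ₀}(b_{Λ₀}) for all Λ₀ ⊆ Λ. -/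
open Finset Matrix
open scoped ComplexOrder

variable {V I : Type*}

/-- The operator `⊗_{x∈Λ} h_{x,i} h_{x,j}*` in the concrete model. -/
noncomputable def prodRankOne [DecidableEq V] (d : V → ℕ)
    (h : (x : V) → I → (Fin (d x) → ℂ)) (Λ : Finset V) (i j : I) :
    Matrix ((x : {y // y ∈ Λ}) → Fin (d x.1)) ((x : {y // y ∈ Λ}) → Fin (d x.1)) ℂ :=
  Matrix.of fun f g => ∏ x : {y // y ∈ Λ}, (h x.1 i (f x) * (starRingEnd ℂ) (h x.1 j (g x)))

/-- The product operator `⊗_{x∈Λ} b_x` in the concrete model. -/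
noncomputable def prodOp [DecidableEq V] (d : V → ℕ) (Λ : Finset V)
    (b : (x : V) → Matrix (Fin (d x)) (Fin (d x)) ℂ) :
    Matrix ((x : {y // y ∈ Λ}) → Fin (d x.1)) ((x : {y // y ∈ Λ}) → Fin (d x.1)) ℂ :=
  Matrix.of fun f g => ∏ x : {y // y ∈ Λ}, b x.1 (f x) (g x)

/-- The functional `ψ̂_Λ(B) := Σ_{i,j} β_{Λᶜ;i,j} Tr((⊗_x h_{x,i}h_{x,j}*) B)`. -/
noncomputable def psiHat [DecidableEq V] [Fintype I] (d : V → ℕ)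
    (h : (x : V) → I → (Fin (d x) → ℂ)) (β : Finset V → I → I → ℂ) (Λ : Finset V)
    (B : Matrix ((x : {y // y ∈ Λ}) → Fin (d x.1)) ((x : {y // y ∈ Λ}) → Fin (d x.1)) ℂ) :
    ℂ :=
  ∑ i : I, ∑ j : I, β Λ i j * (prodRankOne d h Λ i j * B).trace

private def pairPiEquiv {ι : Type*} (κ κ' : ι → Type*) :
    ((∀ i, κ i) × (∀ i, κ' i)) ≃ (∀ i, κ i × κ' i) where
  toFun p i := (p.1 i, p.2 i)
  invFun q := (fun i => (q i).1, fun i => (q i).2)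
  left_inv _ := rfl
  right_inv _ := rfl

private lemma sum_rot {α β γ : Type*} [Fintype α] [Fintype β] [Fintype γ]
    (F : α → β → γ → ℂ) :
    ∑ a, ∑ b, ∑ c, F a b c = ∑ c, ∑ a, ∑ b, F a b c := by
  have h1 : ∀ a, ∑ b, ∑ c, F a b c = ∑ c, ∑ b, F a b c := fun a => Finset.sum_comm
  simp_rw [h1]
  exact Finset.sum_comm

private lemma trace_gram {n m : Type*} [Fintype n] [Fintype m] (A : Matrix m n ℂ) (u w : n → ℂ)
    (R : Matrix n n ℂ) (hR : ∀ f g, R f g = u f * (starRingEnd ℂ) (w g)) :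
    (R * (Aᴴ * A)).trace = ∑ k, (A *ᵥ u) k * (starRingEnd ℂ) ((A *ᵥ w) k) := by
  simp only [Matrix.trace, Matrix.diag, Matrix.mul_apply, Matrix.conjTranspose_apply,
    Matrix.mulVec, dotProduct, hR, starRingEnd_apply, star_sum, star_mul',
    Finset.sum_mul, Finset.mul_sum]
  rw [sum_rot]
  refine Finset.sum_congr rfl fun k _ => Finset.sum_comm.trans ?_
  refine Finset.sum_congr rfl fun g _ => Finset.sum_congr rfl fun f _ => ?_
  ring

private lemma trace_prodRankOne_mul [DecidableEq V] {d : V → ℕ}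
    (h : (x : V) → I → (Fin (d x) → ℂ)) (Λ : Finset V) (i j : I)
    (b : (x : V) → Matrix (Fin (d x)) (Fin (d x)) ℂ) :
    (prodRankOne d h Λ i j * prodOp d Λ b).trace
      = ∏ x : {y // y ∈ Λ},
          (Matrix.vecMulVec (h x.1 i) (star (h x.1 j)) * b x.1).trace := by
  have hsite : ∀ x : {y // y ∈ Λ},
      (Matrix.vecMulVec (h x.1 i) (star (h x.1 j)) * b x.1).trace
        = ∑ q : Fin (d x.1) × Fin (d x.1),
            h x.1 i q.1 * (starRingEnd ℂ) (h x.1 j q.2) * b x.1 q.2 q.1 := by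
    intro x
    rw [Fintype.sum_prod_type]
    simp [Matrix.trace, Matrix.mul_apply, Matrix.vecMulVec_apply, Matrix.diag,
      Finset.mul_sum, Pi.star_apply, mul_assoc, mul_comm, mul_left_comm]
  simp_rw [hsite]
  rw [Finset.prod_univ_sum]
  have : (prodRankOne d h Λ i j * prodOp d Λ b).trace
      = ∑ f : ((x : {y // y ∈ Λ}) → Fin (d x.1)), ∑ g : ((x : {y // y ∈ Λ}) → Fin (d x.1)),
          ∏ x : {y // y ∈ Λ},
            (h x.1 i (f x) * (starRingEnd ℂ) (h x.1 j (g x)) * b x.1 (g x) (f x)) := by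
    simp [Matrix.trace, Matrix.mul_apply, Matrix.diag, prodRankOne, prodOp,
      ← Finset.prod_mul_distrib]
  rw [this, Fintype.piFinset_univ, ← Fintype.sum_prod_type']
  exact Fintype.sum_equiv (pairPiEquiv _ _) _ _ (fun p => rfl)

/-- if the boundary matrices `β_{Λᶜ}` are positive semidefinite and
compatible (`β_{Λᶜ;i,j} Π_{x∈Λ∖Λ₀} Tr(h_{x,i}h_{x,j}*) = β_{Λ₀ᶜ;i,j}`), then the
functionals `ψ̂_Λ` are positive and projective. -/
theorem psiHat_positive_projective [DecidableEq V] [Fintype I] (d : V → ℕ)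
    (h : (x : V) → I → (Fin (d x) → ℂ)) (β : Finset V → I → I → ℂ)
    (hpos : ∀ Λ : Finset V, (Matrix.of fun i j : I => β Λ i j).PosSemidef)
    (hcompat : ∀ (Λ₀ Λ : Finset V), Λ₀ ⊆ Λ → ∀ i j : I,
      β Λ i j * ∏ x ∈ Λ \ Λ₀, (Matrix.vecMulVec (h x i) (star (h x j))).trace =
        β Λ₀ i j) :
    (∀ (Λ : Finset V)
        (B : Matrix ((x : {y // y ∈ Λ}) → Fin (d x.1))
          ((x : {y // y ∈ Λ}) → Fin (d x.1)) ℂ),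
        B.PosSemidef → 0 ≤ psiHat d h β Λ B) ∧
    (∀ (Λ₀ Λ : Finset V), Λ₀ ⊆ Λ →
      ∀ b : (x : V) → Matrix (Fin (d x)) (Fin (d x)) ℂ,
        (∀ x ∈ Λ \ Λ₀, b x = 1) →
        psiHat d h β Λ (prodOp d Λ b) = psiHat d h β Λ₀ (prodOp d Λ₀ b)) := by
  constructor
  · intro Λ B hB
    obtain ⟨A, hA⟩ : ∃ A : Matrix ((x : {y // y ∈ Λ}) → Fin (d x.1))
        ((x : {y // y ∈ Λ}) → Fin (d x.1)) ℂ, B = Aᴴ * A := by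
      open scoped Matrix.Norms.L2Operator MatrixOrder in
      classical
      obtain ⟨X, hX⟩ := CStarAlgebra.nonneg_iff_eq_star_mul_self.mp hB.nonneg
      exact ⟨X, hX⟩
    set v : I → ((x : {y // y ∈ Λ}) → Fin (d x.1)) → ℂ :=
      fun i f => ∏ x : {y // y ∈ Λ}, h x.1 i (f x) with hv
    have hR : ∀ i j f g, prodRankOne d h Λ i j f g = v i f * (starRingEnd ℂ) (v j g) := by
      intro i j f g
      simp [prodRankOne, hv, Finset.prod_mul_distrib, map_prod]
    have htr : ∀ i j : I, (prodRankOne d h Λ i j * B).trace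
        = ∑ k, (A *ᵥ v i) k * (starRingEnd ℂ) ((A *ᵥ v j) k) := by
      intro i j; rw [hA]; exact trace_gram A (v i) (v j) _ (hR i j)
    unfold psiHat
    simp_rw [htr, Finset.mul_sum]
    rw [sum_rot (fun i j k => β Λ i j * ((A *ᵥ v i) k * (starRingEnd ℂ) ((A *ᵥ v j) k)))]
    refine Finset.sum_nonneg fun k _ => ?_
    have hp := (hpos Λ).dotProduct_mulVec_nonneg (fun j => (starRingEnd ℂ) ((A *ᵥ v j) k))
    have heq : star (fun j => (starRingEnd ℂ) ((A *ᵥ v j) k)) ⬝ᵥ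
          ((Matrix.of fun i j : I => β Λ i j) *ᵥ fun j => (starRingEnd ℂ) ((A *ᵥ v j) k))
        = ∑ i, ∑ j, β Λ i j * ((A *ᵥ v i) k * (starRingEnd ℂ) ((A *ᵥ v j) k)) := by
      simp only [dotProduct, Matrix.mulVec, Matrix.of_apply, Pi.star_apply,
        starRingEnd_apply, star_star, Finset.mul_sum]
      exact Finset.sum_congr rfl fun i _ => Finset.sum_congr rfl fun j _ => by ring
    rw [← heq]
    exact hp
  · intro Λ₀ Λ hsub b hb
    unfold psiHat
    refine Finset.sum_congr rfl fun i _ => Finset.sum_congr rfl fun j _ => ?_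
    rw [trace_prodRankOne_mul, trace_prodRankOne_mul]
    have hc : ∀ (Λ' : Finset V),
        (∏ x : {y // y ∈ Λ'}, (Matrix.vecMulVec (h x.1 i) (star (h x.1 j)) * b x.1).trace)
          = ∏ x ∈ Λ', (Matrix.vecMulVec (h x i) (star (h x j)) * b x).trace := fun Λ' =>
      Finset.prod_coe_sort Λ' (fun x => (Matrix.vecMulVec (h x i) (star (h x j)) * b x).trace)
    rw [hc, hc, ← Finset.prod_sdiff hsub]
    have h1 : ∀ x ∈ Λ \ Λ₀,
        (Matrix.vecMulVec (h x i) (star (h x j)) * b x).trace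
          = (Matrix.vecMulVec (h x i) (star (h x j))).trace := fun x hx => by
      rw [hb x hx, mul_one]
    rw [Finset.prod_congr rfl h1, ← mul_assoc, hcompat Λ₀ Λ hsub i j]
end
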